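/- The greedy policy is optimal for Globally with a propositional operand: if π(x) ∈ argmax_a min( q(x), V*_{G q}(f(x,a)) ), then along the closed-loop trajectory x̄_{0:∞} generated by π from any x̄₀, (i) the sequence V*_{G q}(x̄_k) is nondecreasing in k, (ii) q(x̄_k) ≥ V*_{G q}(x̄₀) for all k, and therefore (iii) inf_{k ≥ 0} q(x̄_k) = V*_{G q}(x̄₀). -/
import Mathlib


variable {X A : Type*}

/-- Trajectory of the deterministic system `x_{k+1} = f(x_k, a_k)` from `x0`. -/
def traj (f : X → A → X) (x0 : X) (a : ℕ → A) : ℕ → X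
  | 0 => x0
  | n + 1 => f (traj f x0 a n) (a n)

/-- Optimal value of `G q`: sup over action sequences of `inf_{k ≥ 0} q (x_k)`. -/
noncomputable def VG (f : X → A → X) (q : X → EReal) (x0 : X) : EReal :=
  ⨆ a : ℕ → A, ⨅ k : ℕ, q (traj f x0 a k)

/-- Closed-loop trajectory generated by a Markovian policy π from x0. -/
def closedLoop (f : X → A → X) (π : X → A) (x0 : X) : ℕ → X
  | 0 => x0
  | k + 1 => f (closedLoop f π x0 k) (π (closedLoop f π x0 k))

lemma traj_shift (f : X → A → X) (x0 : X) (a : ℕ → A) :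
    ∀ k, traj f x0 a (k + 1) = traj f (f x0 (a 0)) (fun n => a (n + 1)) k := by
  intro k
  induction k with
  | zero => rfl
  | succ n ih =>
    show f (traj f x0 a (n + 1)) (a (n + 1)) = _
    rw [ih]
    rfl

lemma iInf_nat_split (g : ℕ → EReal) : (⨅ k, g k) = min (g 0) (⨅ k, g (k + 1)) := by
  apply le_antisymm
  · exact le_min (iInf_le _ 0) (le_iInf fun k => iInf_le _ (k + 1))
  · refine le_iInf fun k => ?_
    cases k with
    | zero => exact min_le_left _ _
    | succ n => exact (min_le_right _ _).trans (iInf_le _ n)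

/-- One direction of the Bellman recursion. -/
lemma VG_le (f : X → A → X) (q : X → EReal) (x : X) [Nonempty A] :
    VG f q x ≤ ⨆ a : A, min (q x) (VG f q (f x a)) := by
  refine iSup_le fun a => ?_
  refine le_trans ?_ (le_iSup _ (a 0))
  refine le_min (iInf_le _ 0) ?_
  refine le_trans ?_ (le_iSup (fun b : ℕ → A => ⨅ k, q (traj f (f x (a 0)) b k))
    (fun n => a (n + 1)))
  refine le_iInf fun k => ?_
  rw [← traj_shift]
  exact iInf_le _ (k + 1)

/-- The other direction of the Bellman recursion, for a single action. -/
lemma min_VG_le (f : X → A → X) (q : X → EReal) (x : X) (a0 : A) :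
    min (q x) (VG f q (f x a0)) ≤ VG f q x := by
  -- distribute min over the sup
  have hdist : min (q x) (VG f q (f x a0)) ≤
      ⨆ b : ℕ → A, min (q x) (⨅ k, q (traj f (f x a0) b k)) := by
    by_cases h : ∃ b : ℕ → A, q x ≤ ⨅ k, q (traj f (f x a0) b k)
    · obtain ⟨b, hb⟩ := h
      refine le_trans (min_le_left _ _) ?_
      refine le_trans ?_ (le_iSup _ b)
      exact le_min le_rfl hb
    · push_neg at h
      refine le_trans (min_le_right _ _) ?_
      refine iSup_le fun b => ?_
      refine le_trans ?_ (le_iSup _ b)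
      exact le_min (le_of_lt (h b)) le_rfl
  refine hdist.trans (iSup_le fun b => ?_)
  -- realize min(q x, inf) as the value of the concatenated action sequence
  set c : ℕ → A := fun n => Nat.casesOn n a0 b with hc
  refine le_trans ?_ (le_iSup (fun a : ℕ → A => ⨅ k, q (traj f x a k)) c)
  have htraj : ∀ k, traj f x c (k + 1) = traj f (f x a0) b k := by
    intro k
    rw [traj_shift]
    rfl
  rw [iInf_nat_split (fun k => q (traj f x c k))]
  refine min_le_min le_rfl ?_
  refine le_iInf fun k => ?_
  rw [htraj k]
  exact iInf_le _ k

lemma VG_eq_min (f : X → A → X) (q : X → EReal) (π : X → A) [Nonempty A]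
    (hπ : ∀ (x : X) (a : A),
      min (q x) (VG f q (f x a)) ≤ min (q x) (VG f q (f x (π x)))) (x : X) :
    VG f q x = min (q x) (VG f q (f x (π x))) := by
  apply le_antisymm
  · exact (VG_le f q x).trans (iSup_le fun a => hπ x a)
  · exact min_VG_le f q x (π x)

lemma closedLoop_eq_traj (f : X → A → X) (π : X → A) (x0 : X) :
    ∀ k, closedLoop f π x0 k = traj f x0 (fun n => π (closedLoop f π x0 n)) k := by
  intro k
  induction k with
  | zero => rfl
  | succ n ih => simp only [closedLoop, traj, ih]

/-- the greedy policy is optimal for Globally with a propositional operand: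
if `π(x)` maximizes `a ↦ min(q x, V*_{G q}(f(x,a)))`, then along the closed-loop trajectory
(i) the value sequence is nondecreasing, (ii) `q(x̄_k) ≥ V*_{G q}(x̄₀)` for all k, and
(iii) `inf_k q(x̄_k) = V*_{G q}(x̄₀)`. -/
theorem greedy_globally_optimal [Nonempty A] [Finite A]
    (f : X → A → X) (q : X → EReal) (hq : (Set.range q).Finite)
    (π : X → A)
    (hπ : ∀ (x : X) (a : A),
      min (q x) (VG f q (f x a)) ≤ min (q x) (VG f q (f x (π x))))
    (x0 : X) :
    (∀ k : ℕ, VG f q (closedLoop f π x0 k) ≤ VG f q (closedLoop f π x0 (k + 1))) ∧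
    (∀ k : ℕ, VG f q x0 ≤ q (closedLoop f π x0 k)) ∧
    (⨅ k : ℕ, q (closedLoop f π x0 k)) = VG f q x0 := by
  have key : ∀ x, VG f q x = min (q x) (VG f q (f x (π x))) := VG_eq_min f q π hπ
  have hmono : ∀ k : ℕ, VG f q (closedLoop f π x0 k) ≤ VG f q (closedLoop f π x0 (k + 1)) := by
    intro k
    have := key (closedLoop f π x0 k)
    rw [show closedLoop f π x0 (k + 1)
        = f (closedLoop f π x0 k) (π (closedLoop f π x0 k)) from rfl]
    rw [this]
    exact min_le_right _ _
  have hmono' : ∀ k : ℕ, VG f q x0 ≤ VG f q (closedLoop f π x0 k) := by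
    intro k
    induction k with
    | zero => exact le_rfl
    | succ n ih => exact ih.trans (hmono n)
  have hq' : ∀ k : ℕ, VG f q x0 ≤ q (closedLoop f π x0 k) := by
    intro k
    refine (hmono' k).trans ?_
    rw [key (closedLoop f π x0 k)]
    exact min_le_left _ _
  refine ⟨hmono, hq', le_antisymm ?_ (le_iInf hq')⟩
  refine le_trans ?_ (le_iSup (fun a : ℕ → A => ⨅ k, q (traj f x0 a k))
    (fun n => π (closedLoop f π x0 n)))
  refine le_iInf fun k => ?_
  rw [← closedLoop_eq_traj]
  exact iInf_le _ k
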